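/- Let C ⊆ L⁰₊ be convex with 1 ∈ C, suppose cs_1(C) is bounded in probability, and let S := { f ∈ L⁰₊ : 0 ≤ f ≤ h a.s. for some h ∈ cs_1(C) } be the solid hull of cs_1(C). Then S ∈ CS_1(C) (i.e., C ⊆ S, S is convex and closed in probability, and f ∈ S, δ ≥ 0, (1+δ)f − δ ∈ L⁰₊ imply (1+δ)f − δ ∈ S), and 1 is maximal in S. -/

import Mathlib

open MeasureTheory Filter Set

noncomputable section

variable {Ω : Type*} [MeasurableSpace Ω]

/-- The nonnegative orthant `L⁰₊` of `L⁰`: (a.e. classes of) random variables that are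
a.e. nonnegative.  We work with representatives, requiring a.e.-measurability. -/
def L0plus (P : Measure Ω) : Set (Ω → ℝ) :=
  {f | AEMeasurable f P ∧ 0 ≤ᵐ[P] f}

/-- A set `A ⊆ L⁰₊` is bounded (in probability) if `lim_{ℓ→∞} sup_{f∈A} P[f>ℓ] = 0`. -/
def BoundedInProb (P : Measure Ω) (A : Set (Ω → ℝ)) : Prop :=
  Tendsto (fun ℓ : ℝ => ⨆ f ∈ A, P {ω | ℓ < f ω}) atTop (nhds 0)

/-- A set `K` is closed in probability: it contains every (a.e.-measurable) limit in
measure of sequences from `K`.  (Convergence in probability is metrizable, so sequential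
closedness is closedness.) -/
def ClosedInProb (P : Measure Ω) (K : Set (Ω → ℝ)) : Prop :=
  ∀ (f : ℕ → Ω → ℝ) (g : Ω → ℝ), (∀ n, f n ∈ K) → AEMeasurable g P →
    TendstoInMeasure P f atTop g → g ∈ K

/-- `g` is strictly positive on `C`: `P[f > 0, g = 0] = 0` for every `f ∈ C`. -/
def StrictlyPositiveOn (P : Measure Ω) (C : Set (Ω → ℝ)) (g : Ω → ℝ) : Prop :=
  ∀ f ∈ C, P ({ω | 0 < f ω} ∩ {ω | g ω = 0}) = 0

/-- `Q` is a probability measure equivalent to `P`. -/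
def EquivProb (P Q : Measure Ω) : Prop :=
  IsProbabilityMeasure Q ∧ Q ≪ P ∧ P ≪ Q

/-- `g` is a numéraire of `C`: it is strictly positive on `C` and there is an equivalent
probability `Q` with `E_Q[(f/g)·1_{g>0}] ≤ Q[g>0]` for all `f ∈ C`. -/
def IsNumeraire (P : Measure Ω) (C : Set (Ω → ℝ)) (g : Ω → ℝ) : Prop :=
  StrictlyPositiveOn P C g ∧
    ∃ Q : Measure Ω, EquivProb P Q ∧
      ∀ f ∈ C, (∫⁻ ω in {ω | 0 < g ω}, ENNReal.ofReal (f ω / g ω) ∂Q) ≤ Q {ω | 0 < g ω}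

/-- The class `CS_g(C)` of subsets `K` of `L⁰₊` with (CS1) `C ⊆ K`, (CS2) `K` convex and
closed in probability, (CS3) `f ∈ K`, `δ ≥ 0`, `(1+δ)f − δg ∈ L⁰₊` imply `(1+δ)f − δg ∈ K`. -/
def CSclass (P : Measure Ω) (C : Set (Ω → ℝ)) (g : Ω → ℝ) : Set (Set (Ω → ℝ)) :=
  {K | K ⊆ L0plus P ∧ C ⊆ K ∧ Convex ℝ K ∧ ClosedInProb P K ∧
    ∀ f ∈ K, ∀ δ : ℝ, 0 ≤ δ →
      (fun ω => (1 + δ) * f ω - δ * g ω) ∈ L0plus P →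
      (fun ω => (1 + δ) * f ω - δ * g ω) ∈ K}

/-- `cs_g(C)`, the smallest element of `CS_g(C)`. -/
def csSet (P : Measure Ω) (C : Set (Ω → ℝ)) (g : Ω → ℝ) : Set (Ω → ℝ) :=
  ⋂ K ∈ CSclass P C g, K

/-- The solid hull of `K` in `L⁰₊`. -/
def SolidHull (P : Measure Ω) (K : Set (Ω → ℝ)) : Set (Ω → ℝ) :=
  {f | f ∈ L0plus P ∧ ∃ h ∈ K, f ≤ᵐ[P] h}

/-- `L∞`: essentially bounded (a.e.-measurable) random variables. -/
def Linf (P : Measure Ω) : Set (Ω → ℝ) :=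
  {f | AEMeasurable f P ∧ ∃ c : ℝ, ∀ᵐ ω ∂P, |f ω| ≤ c}

/-- `L∞₊ = L⁰₊ ∩ L∞`. -/
def LinfPlus (P : Measure Ω) : Set (Ω → ℝ) := L0plus P ∩ Linf P

/-- `L` is solid: `0 ≤ u ≤ h` a.s. with `h ∈ L` implies `u ∈ L`. -/
def IsSolid (P : Measure Ω) (L : Set (Ω → ℝ)) : Prop :=
  ∀ u : Ω → ℝ, AEMeasurable u P → 0 ≤ᵐ[P] u → (∃ h ∈ L, u ≤ᵐ[P] h) → u ∈ L

/-- `A_α := α (L − 1) = { α(f − 1) : f ∈ L }`. -/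
def Aset (L : Set (Ω → ℝ)) (α : ℝ) : Set (Ω → ℝ) :=
  (fun f : Ω → ℝ => fun ω => α * (f ω - 1)) '' L

/-- `J := ⋃_{α ≥ 0} A_α`. -/
def Jset (L : Set (Ω → ℝ)) : Set (Ω → ℝ) := ⋃ α ∈ Ici (0 : ℝ), Aset L α

/-- The weak* topology on (representatives of) `L∞`, viewed as the dual of `L¹(P)`:
the topology induced by the maps `φ ↦ ∫ φ·u dP` for integrable `u`. -/
def weakStarTop (P : Measure Ω) : TopologicalSpace (Ω → ℝ) :=
  ⨅ (u : Ω → ℝ) (_ : Integrable u P),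
    TopologicalSpace.induced (fun φ : Ω → ℝ => ∫ ω, φ ω * u ω ∂P) inferInstance

/-- The witness set `K := { h ∈ L⁰₊ : P[h>0, g=0]=0 and E_Q[(h/g)·1_{g>0}] ≤ Q[g>0] }`. -/
def Kwitness (P Q : Measure Ω) (g : Ω → ℝ) : Set (Ω → ℝ) :=
  {h | h ∈ L0plus P ∧ P ({ω | 0 < h ω} ∩ {ω | g ω = 0}) = 0 ∧
    (∫⁻ ω in {ω | 0 < g ω}, ENNReal.ofReal (h ω / g ω) ∂Q) ≤ Q {ω | 0 < g ω}}

/-- The set `C` of the example: outcomes `1 − θ₁ + (θ₁ + θ₂)ξ` for `θ` in the constraint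
set `Θ = { θ ∈ ℝ₊² : θ₂ ≤ √θ₁ ≤ 1 }`. -/
def exampleC (ξ : Ω → ℝ) : Set (Ω → ℝ) :=
  {f | ∃ θ : ℝ × ℝ, (0 ≤ θ.1 ∧ 0 ≤ θ.2 ∧ θ.2 ≤ Real.sqrt θ.1 ∧ Real.sqrt θ.1 ≤ 1) ∧
    f = fun ω => 1 - θ.1 + (θ.1 + θ.2) * ξ ω}

/-! ### Auxiliary machinery -/

section Aux

set_option linter.unusedSectionVars false

variable {Ω : Type*} [MeasurableSpace Ω]

/-- A forward convex combination of the sequence `h` using only indices `≥ n`. -/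
def MyCombo (h : ℕ → Ω → ℝ) (n : ℕ) (f : Ω → ℝ) : Prop :=
  ∃ (N : ℕ) (w : ℕ → ℝ), (∀ k, 0 ≤ w k) ∧ (∀ k, k < n → w k = 0) ∧
    (∀ k, N ≤ k → w k = 0) ∧ (∑ k ∈ Finset.range N, w k) = 1 ∧
    f = fun ω => ∑ k ∈ Finset.range N, w k * h k ω

lemma myCombo_self (h : ℕ → Ω → ℝ) {n m : ℕ} (hnm : n ≤ m) : MyCombo h n (h m) := by
  refine ⟨m + 1, fun k => if k = m then 1 else 0, ?_, ?_, ?_, ?_, ?_⟩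
  · intro k; dsimp only; split <;> norm_num
  · intro k hk; have : k ≠ m := by omega
    simp [this]
  · intro k hk; have : k ≠ m := by omega
    simp [this]
  · rw [Finset.sum_ite_eq' (Finset.range (m + 1)) m (fun _ => (1:ℝ))]
    simp
  · funext ω
    rw [show (∑ k ∈ Finset.range (m+1), (if k = m then (1:ℝ) else 0) * h k ω)
        = ∑ k ∈ Finset.range (m+1), (if k = m then h k ω else 0) by
      apply Finset.sum_congr rfl; intro k _; split <;> simp]
    rw [Finset.sum_ite_eq' (Finset.range (m + 1)) m (fun k => h k ω)]
    simp

lemma myCombo_mono (h : ℕ → Ω → ℝ) {n n' : ℕ} (hn : n' ≤ n) {f : Ω → ℝ}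
    (hf : MyCombo h n f) : MyCombo h n' f := by
  obtain ⟨N, w, h0, h1, h2, h3, h4⟩ := hf
  exact ⟨N, w, h0, fun k hk => h1 k (lt_of_lt_of_le hk hn), h2, h3, h4⟩

lemma myCombo_mid (h : ℕ → Ω → ℝ) {n : ℕ} {f g : Ω → ℝ}
    (hf : MyCombo h n f) (hg : MyCombo h n g) :
    MyCombo h n (fun ω => (f ω + g ω) / 2) := by
  obtain ⟨N₁, w₁, hf0, hf1, hf2, hf3, hf4⟩ := hf
  obtain ⟨N₂, w₂, hg0, hg1, hg2, hg3, hg4⟩ := hg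
  have hs₁ : ∑ k ∈ Finset.range (max N₁ N₂), w₁ k = 1 := by
    rw [← hf3]
    exact (Finset.sum_subset (Finset.range_subset_range.2 (le_max_left _ _))
      (fun k _ hk => hf2 k (by simpa using hk))).symm
  have hs₂ : ∑ k ∈ Finset.range (max N₁ N₂), w₂ k = 1 := by
    rw [← hg3]
    exact (Finset.sum_subset (Finset.range_subset_range.2 (le_max_right _ _))
      (fun k _ hk => hg2 k (by simpa using hk))).symm
  refine ⟨max N₁ N₂, fun k => (w₁ k + w₂ k) / 2, ?_, ?_, ?_, ?_, ?_⟩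
  · intro k; dsimp only; have := hf0 k; have := hg0 k; positivity
  · intro k hk; dsimp only; rw [hf1 k hk, hg1 k hk]; norm_num
  · intro k hk; dsimp only
    rw [hf2 k (le_trans (le_max_left _ _) hk), hg2 k (le_trans (le_max_right _ _) hk)]
    norm_num
  · dsimp only
    rw [← Finset.sum_div, Finset.sum_add_distrib, hs₁, hs₂]; norm_num
  · funext ω
    have e₁ : f ω = ∑ k ∈ Finset.range (max N₁ N₂), w₁ k * h k ω := by
      rw [hf4]
      exact Finset.sum_subset (Finset.range_subset_range.2 (le_max_left _ _))
        (fun k _ hk => by rw [hf2 k (by simpa using hk), zero_mul])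
    have e₂ : g ω = ∑ k ∈ Finset.range (max N₁ N₂), w₂ k * h k ω := by
      rw [hg4]
      exact Finset.sum_subset (Finset.range_subset_range.2 (le_max_right _ _))
        (fun k _ hk => by rw [hg2 k (by simpa using hk), zero_mul])
    dsimp only
    rw [e₁, e₂, ← Finset.sum_add_distrib, Finset.sum_div]
    apply Finset.sum_congr rfl
    intro k _; ring

lemma myCombo_mem {K : Set (Ω → ℝ)} (hK : Convex ℝ K) {h : ℕ → Ω → ℝ}
    (hh : ∀ k, h k ∈ K) {n : ℕ} {f : Ω → ℝ} (hf : MyCombo h n f) : f ∈ K := by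
  obtain ⟨N, w, h0, _, _, h3, h4⟩ := hf
  have : f = ∑ k ∈ Finset.range N, w k • h k := by
    rw [h4]; funext ω
    rw [Finset.sum_apply]
    apply Finset.sum_congr rfl
    intro k _; simp [smul_eq_mul]
  rw [this]
  exact hK.sum_mem (fun k _ => h0 k) h3 (fun k _ => hh k)

lemma myCombo_aemeasurable {P : Measure Ω} {h : ℕ → Ω → ℝ}
    (hh : ∀ k, AEMeasurable (h k) P) {n : ℕ} {f : Ω → ℝ} (hf : MyCombo h n f) :
    AEMeasurable f P := by
  obtain ⟨N, w, _, _, _, _, h4⟩ := hf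
  rw [h4]
  exact Finset.aemeasurable_fun_sum _ (fun k _ => (hh k).const_mul (w k))

lemma myCombo_nonneg {P : Measure Ω} {h : ℕ → Ω → ℝ}
    (hh : ∀ k, 0 ≤ᵐ[P] h k) {n : ℕ} {f : Ω → ℝ} (hf : MyCombo h n f) :
    0 ≤ᵐ[P] f := by
  obtain ⟨N, w, h0, _, _, _, h4⟩ := hf
  have := MeasureTheory.ae_all_iff.2 hh
  filter_upwards [this] with ω hω
  rw [h4]
  exact Finset.sum_nonneg fun k _ => mul_nonneg (h0 k) (hω k)

/-- Convergence of forward convex combinations. -/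
lemma combo_tendsto {x : ℕ → ℝ} {L : ℝ} (hx : Tendsto x atTop (nhds L))
    (N : ℕ → ℕ) (w : ℕ → ℕ → ℝ) (hw0 : ∀ k j, 0 ≤ w k j)
    (hwlt : ∀ k j, j < k → w k j = 0)
    (hws : ∀ k, ∑ j ∈ Finset.range (N k), w k j = 1) :
    Tendsto (fun k => ∑ j ∈ Finset.range (N k), w k j * x j) atTop (nhds L) := by
  rw [Metric.tendsto_atTop] at hx ⊢
  intro ε hε
  obtain ⟨T, hT⟩ := hx (ε / 2) (by positivity)
  refine ⟨T, fun k hk => ?_⟩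
  rw [Real.dist_eq]
  have e1 : ∑ j ∈ Finset.range (N k), w k j * x j - L
      = ∑ j ∈ Finset.range (N k), w k j * (x j - L) := by
    rw [show ∑ j ∈ Finset.range (N k), w k j * (x j - L)
        = ∑ j ∈ Finset.range (N k), (w k j * x j - w k j * L) by
      apply Finset.sum_congr rfl; intro j _; ring]
    rw [Finset.sum_sub_distrib, ← Finset.sum_mul, hws k, one_mul]
  rw [e1]
  calc |∑ j ∈ Finset.range (N k), w k j * (x j - L)|
      ≤ ∑ j ∈ Finset.range (N k), |w k j * (x j - L)| := Finset.abs_sum_le_sum_abs _ _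
    _ ≤ ∑ j ∈ Finset.range (N k), w k j * (ε / 2) := by
        apply Finset.sum_le_sum
        intro j _
        rcases lt_or_ge j k with hj | hj
        · rw [hwlt k j hj]; simp
        · rw [abs_mul, abs_of_nonneg (hw0 k j)]
          apply mul_le_mul_of_nonneg_left _ (hw0 k j)
          rw [← Real.dist_eq]
          exact (hT j (le_trans hk hj)).le
    _ = ε / 2 := by rw [← Finset.sum_mul, hws k, one_mul]
    _ < ε := by linarith

end Aux
section Aux2
set_option linter.unusedSectionVars false

variable {Ω : Type*} [MeasurableSpace Ω]

lemma exp_half_sq (x : ℝ) : Real.exp (-x / 2) ^ 2 = Real.exp (-x) := by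
  rw [← Real.exp_nat_mul]
  congr 1; push_cast; ring

/-- The key strict-concavity identity for `u t = 1 - exp (-t)`. -/
lemma u_mid_identity (x y : ℝ) :
    1 - Real.exp (-((x + y) / 2))
      = (1 - Real.exp (-x)) / 2 + (1 - Real.exp (-y)) / 2
        + (Real.exp (-x / 2) - Real.exp (-y / 2)) ^ 2 / 2 := by
  have h1 : Real.exp (-((x + y) / 2)) = Real.exp (-x / 2) * Real.exp (-y / 2) := by
    rw [← Real.exp_add]; congr 1; ring
  have h2 := exp_half_sq x
  have h3 := exp_half_sq y
  nlinarith [h1, h2, h3]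

lemma u_nonneg {x : ℝ} (hx : 0 ≤ x) : 0 ≤ 1 - Real.exp (-x) := by
  have : Real.exp (-x) ≤ 1 := Real.exp_le_one_iff.2 (by linarith)
  linarith

lemma gap_lower {x y α M : ℝ} (hα : 0 ≤ α) (hxM : x ≤ M) (hyM : y ≤ M)
    (hd : α ≤ |x - y|) :
    Real.exp (-M) * (1 - Real.exp (-α / 2)) ^ 2 / 2
      ≤ (Real.exp (-x / 2) - Real.exp (-y / 2)) ^ 2 / 2 := by
  have key : ∀ a b : ℝ, a ≤ b → b ≤ M → α ≤ b - a →
      Real.exp (-M) * (1 - Real.exp (-α / 2)) ^ 2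
        ≤ (Real.exp (-a / 2) - Real.exp (-b / 2)) ^ 2 := by
    intro a b hab hbM hαab
    have h1 : Real.exp (-M / 2) ≤ Real.exp (-a / 2) :=
      Real.exp_le_exp.2 (by linarith [hab.trans hbM])
    have h2 : Real.exp (-b / 2) = Real.exp (-a / 2) * Real.exp (-(b - a) / 2) := by
      rw [← Real.exp_add]; congr 1; ring
    have h3 : Real.exp (-(b - a) / 2) ≤ Real.exp (-α / 2) :=
      Real.exp_le_exp.2 (by linarith)
    have h4 : 0 ≤ 1 - Real.exp (-α / 2) := by
      have : Real.exp (-α / 2) ≤ 1 := Real.exp_le_one_iff.2 (by linarith)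
      linarith
    have h5 : Real.exp (-a / 2) - Real.exp (-b / 2)
        = Real.exp (-a / 2) * (1 - Real.exp (-(b - a) / 2)) := by rw [h2]; ring
    have h6 : Real.exp (-M / 2) * (1 - Real.exp (-α / 2))
        ≤ Real.exp (-a / 2) * (1 - Real.exp (-(b - a) / 2)) := by
      apply mul_le_mul h1 (by linarith) h4 (Real.exp_nonneg _)
    have h7 : 0 ≤ Real.exp (-M / 2) * (1 - Real.exp (-α / 2)) :=
      mul_nonneg (Real.exp_nonneg _) h4
    calc Real.exp (-M) * (1 - Real.exp (-α / 2)) ^ 2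
        = (Real.exp (-M / 2) * (1 - Real.exp (-α / 2))) ^ 2 := by
          rw [mul_pow, exp_half_sq]
      _ ≤ (Real.exp (-a / 2) * (1 - Real.exp (-(b - a) / 2))) ^ 2 := by
          apply pow_le_pow_left₀ h7 h6
      _ = (Real.exp (-a / 2) - Real.exp (-b / 2)) ^ 2 := by rw [h5]
  rcases le_total x y with hxy | hxy
  · have := key x y hxy hyM (by rw [abs_sub_comm, abs_of_nonneg (by linarith)] at hd; linarith)
    linarith
  · have := key y x hxy hxM (by rw [abs_of_nonneg (by linarith)] at hd; linarith)
    have hsq : (Real.exp (-y / 2) - Real.exp (-x / 2)) ^ 2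
        = (Real.exp (-x / 2) - Real.exp (-y / 2)) ^ 2 := by ring
    linarith

/-- A real sequence whose consecutive increments are eventually geometric converges. -/
lemma tendsto_of_geometric_dist {x : ℕ → ℝ}
    (hx : ∀ᶠ k in atTop, |x k - x (k + 1)| < (2⁻¹ : ℝ) ^ k) :
    ∃ L, Tendsto x atTop (nhds L) := by
  obtain ⟨K₀, hK₀⟩ := eventually_atTop.1 hx
  have hcau : CauchySeq (fun k => x (k + K₀)) := by
    apply cauchySeq_of_le_geometric (2⁻¹ : ℝ) ((2⁻¹ : ℝ) ^ K₀) (by norm_num)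
    intro n
    rw [Real.dist_eq, show n + 1 + K₀ = n + K₀ + 1 from by omega]
    have := hK₀ (n + K₀) (by omega)
    calc |x (n + K₀) - x (n + K₀ + 1)| ≤ (2⁻¹ : ℝ) ^ (n + K₀) := this.le
      _ = (2⁻¹ : ℝ) ^ K₀ * (2⁻¹ : ℝ) ^ n := by rw [pow_add]; ring
  obtain ⟨L, hL⟩ := cauchySeq_tendsto_of_complete hcau
  exact ⟨L, (tendsto_add_atTop_iff_nat K₀).1 hL⟩

end Aux2
section Aux3
set_option linter.unusedSectionVars false

variable {Ω : Type*} [MeasurableSpace Ω]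

lemma L0plus_mem_CSclass (P : Measure Ω) [IsProbabilityMeasure P]
    (C : Set (Ω → ℝ)) (hC : C ⊆ L0plus P) (g : Ω → ℝ) :
    L0plus P ∈ CSclass P C g := by
  refine ⟨subset_rfl, hC, ?_, ?_, ?_⟩
  · intro f hf k hk a b ha hb hab
    constructor
    · have h' : AEMeasurable (fun ω => a * f ω + b * k ω) P :=
        (hf.1.const_mul a).add (hk.1.const_mul b)
      have heq : (a • f + b • k) = fun ω => a * f ω + b * k ω := by
        funext ω; simp [smul_eq_mul]
      rw [heq]; exact h'
    · filter_upwards [hf.2, hk.2] with ω h1 h2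
      have : 0 ≤ a * f ω + b * k ω := add_nonneg (mul_nonneg ha h1) (mul_nonneg hb h2)
      simpa [smul_eq_mul] using this
  · intro f g' hf hg' ht
    refine ⟨hg', ?_⟩
    obtain ⟨ns, -, hns⟩ := ht.exists_seq_tendsto_ae
    have hall := MeasureTheory.ae_all_iff.2 (fun n => (hf (ns n)).2)
    filter_upwards [hns, hall] with ω h1 h2
    exact le_of_tendsto_of_tendsto' tendsto_const_nhds h1 (fun n => h2 n)
  · intro f hf δ hδ hmem; exact hmem

lemma csSet_mem_CSclass (P : Measure Ω) [IsProbabilityMeasure P]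
    (C : Set (Ω → ℝ)) (hC : C ⊆ L0plus P) (g : Ω → ℝ) :
    csSet P C g ∈ CSclass P C g := by
  have hL := L0plus_mem_CSclass P C hC g
  refine ⟨?_, ?_, ?_, ?_, ?_⟩
  · exact fun f hf => (Set.mem_iInter₂.1 hf) _ hL
  · intro f hf; exact Set.mem_iInter₂.2 fun K hK => hK.2.1 hf
  · exact convex_iInter₂ fun K hK => hK.2.2.1
  · intro f g' hf hg' ht
    exact Set.mem_iInter₂.2 fun K hK =>
      hK.2.2.2.1 f g' (fun n => Set.mem_iInter₂.1 (hf n) K hK) hg' ht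
  · intro f hf δ hδ hmem
    exact Set.mem_iInter₂.2 fun K hK =>
      hK.2.2.2.2 f (Set.mem_iInter₂.1 hf K hK) δ hδ hmem

lemma boundedInProb_exists_level (P : Measure Ω) (A : Set (Ω → ℝ))
    (hA : BoundedInProb P A) {ε : ENNReal} (hε : ε ≠ 0) :
    ∃ M : ℝ, ∀ f ∈ A, P {ω | M < f ω} ≤ ε := by
  have h := hA.eventually_lt_const (pos_iff_ne_zero.2 hε)
  obtain ⟨M, hM⟩ := eventually_atTop.1 h
  exact ⟨M, fun f hf => le_of_lt (lt_of_le_of_lt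
    (le_biSup (fun f => P {ω | M < f ω}) hf) (hM M le_rfl))⟩

end Aux3
section Aux4
set_option linter.unusedSectionVars false

variable {Ω : Type*} [MeasurableSpace Ω]

/-- The bounded concave utility functional. -/
def Ifun (P : Measure Ω) (f : Ω → ℝ) : ENNReal :=
  ∫⁻ ω, ENNReal.ofReal (1 - Real.exp (-f ω)) ∂P

lemma Ifun_le_one (P : Measure Ω) [IsProbabilityMeasure P] (f : Ω → ℝ) :
    Ifun P f ≤ 1 := by
  calc Ifun P f ≤ ∫⁻ _, 1 ∂P := by
        apply lintegral_mono
        intro ω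
        exact ENNReal.ofReal_le_one.2 (by linarith [Real.exp_nonneg (-f ω)])
    _ = 1 := by simp

lemma ennreal_half_ne_zero {a : ENNReal} (ha : a ≠ 0) : a / 2 ≠ 0 := by
  simp [ENNReal.div_eq_zero_iff, ha]

lemma lintegral_half (P : Measure Ω) {f : Ω → ENNReal} (hf : Measurable f) :
    ∫⁻ ω, f ω / 2 ∂P = (∫⁻ ω, f ω ∂P) / 2 := by
  simp only [div_eq_mul_inv]
  exact lintegral_mul_const _ hf

/-- A Komlós-type lemma: given a sequence in a convex, bounded-in-probability subset of
`L⁰₊`, there are forward convex combinations converging a.e. -/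
lemma myKomlos (P : Measure Ω) [IsProbabilityMeasure P] (K : Set (Ω → ℝ))
    (hK0 : K ⊆ L0plus P) (hKconv : Convex ℝ K) (hKb : BoundedInProb P K)
    (h : ℕ → Ω → ℝ) (hh : ∀ n, h n ∈ K) :
    ∃ (c : ℕ → Ω → ℝ) (G : Ω → ℝ), (∀ k, c k ∈ K) ∧ (∀ k, MyCombo h k (c k)) ∧
      AEMeasurable G P ∧ (∀ᵐ ω ∂P, Tendsto (fun k => c k ω) atTop (nhds (G ω))) := by
  classical
  set Kn : ℕ → Set (Ω → ℝ) := fun n => {f | f ∈ K ∧ MyCombo h n f} with hKn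
  set s : ℕ → ENNReal := fun n => ⨆ f ∈ Kn n, Ifun P f with hs
  have hKnsub : ∀ {n m : ℕ}, n ≤ m → Kn m ⊆ Kn n :=
    fun hnm f hf => ⟨hf.1, myCombo_mono h hnm hf.2⟩
  have s_anti : Antitone s := fun n m hnm => iSup_le_iSup_of_subset (hKnsub hnm)
  have s_le_one : ∀ n, s n ≤ 1 := fun n => iSup₂_le fun f _ => Ifun_le_one P f
  set sI := ⨅ n, s n with hsI
  have hsItop : sI ≠ ⊤ :=
    ne_top_of_le_ne_top ENNReal.one_ne_top (le_trans (iInf_le s 0) (s_le_one 0))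
  have stend : Tendsto s atTop (nhds sI) := tendsto_atTop_iInf s_anti
  set e : ℕ → ENNReal := fun n => (2⁻¹ : ENNReal) ^ n with he
  have he0 : ∀ n, e n ≠ 0 := by
    intro n; simp only [he]
    exact pow_ne_zero n (by simp)
  have hetend : Tendsto e atTop (nhds 0) :=
    ENNReal.tendsto_pow_atTop_nhds_zero_of_lt_one (by
      rw [ENNReal.inv_lt_one]; exact ENNReal.one_lt_two)
  -- near-optimizers
  have hsel : ∀ n, ∃ f, f ∈ Kn n ∧ s n ≤ Ifun P f + e n := by
    intro n
    by_cases h0 : s n = 0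
    · exact ⟨h n, ⟨hh n, myCombo_self h le_rfl⟩, by rw [h0]; exact zero_le⟩
    · have hfin : s n ≠ ⊤ := ne_top_of_le_ne_top ENNReal.one_ne_top (s_le_one n)
      have hlt : s n - e n < s n := ENNReal.sub_lt_self hfin h0 (he0 n)
      have hlt' : s n - e n < ⨆ f ∈ Kn n, Ifun P f := by
        rw [hs] at hlt; exact hlt
      obtain ⟨f, hf2⟩ := lt_iSup_iff.1 hlt'
      obtain ⟨hfKn, hf3⟩ := lt_iSup_iff.1 hf2
      refine ⟨f, hfKn, ?_⟩
      calc s n ≤ s n - e n + e n := le_tsub_add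
        _ ≤ Ifun P f + e n := add_le_add_left hf3.le _
  choose g hgKn hgI using hsel
  have hgK : ∀ n, g n ∈ K := fun n => (hgKn n).1
  have hgC : ∀ n, MyCombo h n (g n) := fun n => (hgKn n).2
  have haem : ∀ n, AEMeasurable (g n) P := fun n => (hK0 (hgK n)).1
  set gm : ℕ → Ω → ℝ := fun n => (haem n).mk _ with hgmdef
  have hgmeq : ∀ n, g n =ᵐ[P] gm n := fun n => (haem n).ae_eq_mk
  have hgmm : ∀ n, Measurable (gm n) := fun n => (haem n).measurable_mk
  -- the Cauchy-in-measure estimate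
  have key : ∀ α ε : ℝ, 0 < α → 0 < ε → ∃ N : ℕ, ∀ n m, N ≤ n → N ≤ m →
      P {ω | α ≤ |gm n ω - gm m ω|} ≤ ENNReal.ofReal ε := by
    intro α ε hα hε
    set ε' := ENNReal.ofReal ε with hε'
    have hε'0 : ε' ≠ 0 := (ENNReal.ofReal_pos.2 hε).ne'
    obtain ⟨M₀, hM₀⟩ := boundedInProb_exists_level P K hKb
      (ε := ε' / 2 / 2) (ennreal_half_ne_zero (ennreal_half_ne_zero hε'0))
    set M := max M₀ 0 with hM
    have hMlev : ∀ f ∈ K, P {ω | M < f ω} ≤ ε' / 2 / 2 := by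
      intro f hf
      refine le_trans (measure_mono ?_) (hM₀ f hf)
      intro ω hω
      have hω' : M < f ω := hω
      show M₀ < f ω
      exact lt_of_le_of_lt (le_max_left M₀ 0) hω'
    set βr := Real.exp (-M) * (1 - Real.exp (-α / 2)) ^ 2 / 2 with hβr
    have hβrpos : 0 < βr := by
      have h1 : Real.exp (-α / 2) < 1 := by
        rw [Real.exp_lt_one_iff]; linarith
      have h2 : 0 < 1 - Real.exp (-α / 2) := by linarith
      have h3 := Real.exp_pos (-M)
      positivity
    set β := ENNReal.ofReal βr with hβ
    have hβ0 : β ≠ 0 := (ENNReal.ofReal_pos.2 hβrpos).ne'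
    have hβt : β ≠ ⊤ := ENNReal.ofReal_ne_top
    set θ := β * (ε' / 2) with hθ
    have hθ0 : θ ≠ 0 := by
      rw [hθ]
      exact (ENNReal.mul_pos hβ0 (ennreal_half_ne_zero hε'0)).ne'
    set η := θ / 2 with hη
    have hη0 : η ≠ 0 := ennreal_half_ne_zero hθ0
    have hev1 : ∀ᶠ n in atTop, s n < sI + η :=
      stend.eventually_lt_const (ENNReal.lt_add_right hsItop hη0)
    have hev2 : ∀ᶠ n in atTop, e n < η :=
      hetend.eventually_lt_const (pos_iff_ne_zero.2 hη0)
    obtain ⟨N, hN⟩ := eventually_atTop.1 (hev1.and hev2)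
    refine ⟨N, ?_⟩
    have main : ∀ n m, N ≤ n → n ≤ m → P {ω | α ≤ |gm n ω - gm m ω|} ≤ ε' := by
      intro n m hNn hnm
      have hNm : N ≤ m := le_trans hNn hnm
      set A := ({ω | α ≤ |gm n ω - gm m ω|} ∩ {ω | gm n ω ≤ M}) ∩ {ω | gm m ω ≤ M}
        with hA
      have hAmeas : MeasurableSet A := by
        refine MeasurableSet.inter (MeasurableSet.inter ?_ ?_) ?_
        · exact measurableSet_le measurable_const (((hgmm n).sub (hgmm m)).abs)
        · exact measurableSet_le (hgmm n) measurable_const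
        · exact measurableSet_le (hgmm m) measurable_const
      set mid := fun ω => (g n ω + g m ω) / 2 with hmid
      have hmidK : mid ∈ K := by
        have h2 := hKconv (hgK n) (hgK m) (by norm_num : (0:ℝ) ≤ 1/2)
          (by norm_num : (0:ℝ) ≤ 1/2) (by norm_num)
        have heq : mid = (1/2 : ℝ) • g n + (1/2 : ℝ) • g m := by
          funext ω; simp only [hmid, Pi.add_apply, Pi.smul_apply, smul_eq_mul]; ring
        rw [heq]; exact h2
      have hmidC : MyCombo h n mid := myCombo_mid h (hgC n) (myCombo_mono h hnm (hgC m))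
      have hmidI : Ifun P mid ≤ s n := by
        rw [hs]
        exact le_biSup (fun f => Ifun P f) (⟨hmidK, hmidC⟩ : mid ∈ Kn n)
      set X := fun ω => ENNReal.ofReal (1 - Real.exp (-gm n ω)) with hX
      set Y := fun ω => ENNReal.ofReal (1 - Real.exp (-gm m ω)) with hY
      set Z := fun ω =>
        ENNReal.ofReal ((Real.exp (-gm n ω / 2) - Real.exp (-gm m ω / 2)) ^ 2 / 2) with hZ
      have hXm : Measurable X :=
        ENNReal.measurable_ofReal.comp ((Real.measurable_exp.comp (hgmm n).neg).const_sub 1)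
      have hYm : Measurable Y :=
        ENNReal.measurable_ofReal.comp ((Real.measurable_exp.comp (hgmm m).neg).const_sub 1)
      have hZm : Measurable Z := by
        apply ENNReal.measurable_ofReal.comp
        apply Measurable.div_const
        apply Measurable.pow_const
        exact (Real.measurable_exp.comp ((hgmm n).neg.div_const 2)).sub
          (Real.measurable_exp.comp ((hgmm m).neg.div_const 2))
      have hae : ∀ᵐ ω ∂P, 0 ≤ gm n ω ∧ 0 ≤ gm m ω ∧ g n ω = gm n ω ∧ g m ω = gm m ω := by
        have b1 : 0 ≤ᵐ[P] gm n := by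
          filter_upwards [(hK0 (hgK n)).2, hgmeq n] with ω hω1 hω2
          rw [← hω2]; exact hω1
        have b2 : 0 ≤ᵐ[P] gm m := by
          filter_upwards [(hK0 (hgK m)).2, hgmeq m] with ω hω1 hω2
          rw [← hω2]; exact hω1
        filter_upwards [b1, b2, hgmeq n, hgmeq m] with ω h1 h2 h3 h4
        exact ⟨h1, h2, h3, h4⟩
      have Ieq : Ifun P mid = ∫⁻ ω, (X ω / 2 + Y ω / 2 + Z ω) ∂P := by
        apply lintegral_congr_ae
        filter_upwards [hae] with ω hω
        obtain ⟨h1, h2, h3, h4⟩ := hω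
        have hmideq : mid ω = (gm n ω + gm m ω) / 2 := by
          rw [hmid]; simp only []; rw [h3, h4]
        have hu1 : 0 ≤ 1 - Real.exp (-gm n ω) := by
          have : Real.exp (-gm n ω) ≤ 1 := Real.exp_le_one_iff.2 (by linarith)
          linarith
        have hu2 : 0 ≤ 1 - Real.exp (-gm m ω) := by
          have : Real.exp (-gm m ω) ≤ 1 := Real.exp_le_one_iff.2 (by linarith)
          linarith
        rw [hmideq, u_mid_identity]
        rw [ENNReal.ofReal_add (by positivity) (by positivity),
          ENNReal.ofReal_add (by positivity) (by positivity),
          ENNReal.ofReal_div_of_pos two_pos, ENNReal.ofReal_div_of_pos two_pos,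
          ENNReal.ofReal_ofNat]
      have Isplit : ∫⁻ ω, (X ω / 2 + Y ω / 2 + Z ω) ∂P
          = (∫⁻ ω, X ω ∂P) / 2 + (∫⁻ ω, Y ω ∂P) / 2 + ∫⁻ ω, Z ω ∂P := by
        rw [lintegral_add_right _ hZm, lintegral_add_right _ (hYm.div_const 2),
          lintegral_half P hXm, lintegral_half P hYm]
      have hXI : ∫⁻ ω, X ω ∂P = Ifun P (g n) := by
        apply lintegral_congr_ae
        filter_upwards [hgmeq n] with ω hω
        rw [hX]; simp only []; rw [← hω]
      have hYI : ∫⁻ ω, Y ω ∂P = Ifun P (g m) := by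
        apply lintegral_congr_ae
        filter_upwards [hgmeq m] with ω hω
        rw [hY]; simp only []; rw [← hω]
      have hZlow : β * P A ≤ ∫⁻ ω, Z ω ∂P := by
        rw [← lintegral_indicator_const hAmeas]
        apply lintegral_mono
        intro ω
        by_cases hωA : ω ∈ A
        · rw [Set.indicator_of_mem hωA]
          obtain ⟨⟨hd, hn'⟩, hm'⟩ := hωA
          exact ENNReal.ofReal_le_ofReal (gap_lower hα.le hn' hm' hd)
        · rw [Set.indicator_of_notMem hωA]; exact zero_le
      have hchain : Ifun P (g n) / 2 + Ifun P (g m) / 2 + β * P A ≤ s n := by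
        refine le_trans ?_ hmidI
        rw [Ieq, Isplit, hXI, hYI]
        exact add_le_add_right hZlow _
      have a1 : s n / 2 ≤ Ifun P (g n) / 2 + e n / 2 := by
        calc s n / 2 ≤ (Ifun P (g n) + e n) / 2 := ENNReal.div_le_div_right (hgI n) 2
          _ = Ifun P (g n) / 2 + e n / 2 := ENNReal.add_div
      have a2 : sI / 2 ≤ Ifun P (g m) / 2 + e m / 2 := by
        have : sI ≤ Ifun P (g m) + e m := le_trans (iInf_le s m) (hgI m)
        calc sI / 2 ≤ (Ifun P (g m) + e m) / 2 := ENNReal.div_le_div_right this 2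
          _ = Ifun P (g m) / 2 + e m / 2 := ENNReal.add_div
      have hsn : s n < sI + η := (hN n hNn).1
      have hen : e n < η := (hN n hNn).2
      have hem : e m < η := (hN m hNm).2
      have final1 : sI + β * P A ≤ sI + θ := by
        calc sI + β * P A = sI / 2 + sI / 2 + β * P A := by rw [ENNReal.add_halves]
          _ ≤ s n / 2 + sI / 2 + β * P A :=
              add_le_add (add_le_add (ENNReal.div_le_div_right (iInf_le s n) 2) le_rfl) le_rfl
          _ ≤ (Ifun P (g n) / 2 + e n / 2) + (Ifun P (g m) / 2 + e m / 2) + β * P A :=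
              add_le_add (add_le_add a1 a2) le_rfl
          _ = (Ifun P (g n) / 2 + Ifun P (g m) / 2 + β * P A) + (e n / 2 + e m / 2) := by
              ring
          _ ≤ s n + (e n / 2 + e m / 2) := add_le_add hchain le_rfl
          _ ≤ (sI + η) + (η / 2 + η / 2) :=
              add_le_add hsn.le (add_le_add (ENNReal.div_le_div_right hen.le 2)
                (ENNReal.div_le_div_right hem.le 2))
          _ = sI + (η + η) := by rw [ENNReal.add_halves]; ring
          _ = sI + θ := by rw [hη, ENNReal.add_halves]
      have hPA : P A ≤ ε' / 2 := by
        have h5 : β * P A ≤ θ := (ENNReal.add_le_add_iff_left hsItop).1 final1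
        rw [hθ] at h5
        exact (ENNReal.mul_le_mul_iff_right hβ0 hβt).1 h5
      have hsub : {ω | α ≤ |gm n ω - gm m ω|}
          ⊆ A ∪ {ω | M < gm n ω} ∪ {ω | M < gm m ω} := by
        intro ω hω
        simp only [Set.mem_union]
        by_cases c1 : gm n ω ≤ M
        · by_cases c2 : gm m ω ≤ M
          · exact Or.inl (Or.inl ⟨⟨hω, c1⟩, c2⟩)
          · exact Or.inr (not_le.1 c2)
        · exact Or.inl (Or.inr (not_le.1 c1))
      have hBn : ∀ j, P {ω | M < gm j ω} ≤ ε' / 2 / 2 := by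
        intro j
        have hsub2 : {ω | M < gm j ω} ⊆ {ω | M < g j ω} ∪ {ω | ¬ g j ω = gm j ω} := by
          intro ω hω
          by_cases hc : g j ω = gm j ω
          · left; show M < g j ω; rw [hc]; exact hω
          · right; exact hc
        calc P {ω | M < gm j ω} ≤ P {ω | M < g j ω} + P {ω | ¬ g j ω = gm j ω} :=
              le_trans (measure_mono hsub2) (measure_union_le _ _)
          _ ≤ ε' / 2 / 2 + 0 := add_le_add (hMlev _ (hgK j)) (le_of_eq (ae_iff.1 (hgmeq j)))
          _ = ε' / 2 / 2 := add_zero _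
      calc P {ω | α ≤ |gm n ω - gm m ω|}
          ≤ P (A ∪ {ω | M < gm n ω} ∪ {ω | M < gm m ω}) := measure_mono hsub
        _ ≤ P A + P {ω | M < gm n ω} + P {ω | M < gm m ω} :=
            le_trans (measure_union_le _ _) (add_le_add_left (measure_union_le _ _) _)
        _ ≤ ε' / 2 + ε' / 2 / 2 + ε' / 2 / 2 := add_le_add (add_le_add hPA (hBn n)) (hBn m)
        _ = ε' := by rw [add_assoc, ENNReal.add_halves, ENNReal.add_halves]
    intro n m hNn hNm
    rcases le_total n m with hnm | hmn
    · exact main n m hNn hnm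
    · have hset : {ω | α ≤ |gm n ω - gm m ω|} = {ω | α ≤ |gm m ω - gm n ω|} := by
        ext ω
        simp only [Set.mem_setOf_eq, abs_sub_comm]
      rw [hset]
      exact main m n hNm hmn
  -- extract a fast subsequence
  have key2 : ∀ k : ℕ, ∃ N : ℕ, ∀ n m, N ≤ n → N ≤ m →
      P {ω | (2⁻¹ : ℝ) ^ k ≤ |gm n ω - gm m ω|} ≤ (2⁻¹ : ENNReal) ^ k := by
    intro k
    obtain ⟨N, hN⟩ := key ((2⁻¹ : ℝ) ^ k) ((2⁻¹ : ℝ) ^ k) (by positivity) (by positivity)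
    refine ⟨N, fun n m h1 h2 => le_trans (hN n m h1 h2) (le_of_eq ?_)⟩
    rw [ENNReal.ofReal_pow (by norm_num)]
    congr 1
    rw [ENNReal.ofReal_inv_of_pos two_pos, ENNReal.ofReal_ofNat]
  choose Nf hNf using key2
  set ns : ℕ → ℕ := fun k => Nat.rec (Nf 0) (fun k ih => max (Nf (k + 1)) (ih + 1)) k
    with hnsdef
  have hns_succ : ∀ k, ns k < ns (k + 1) :=
    fun k => lt_of_lt_of_le (Nat.lt_succ_self _) (le_max_right _ _)
  have hns_mono : StrictMono ns := strictMono_nat_of_lt_succ hns_succ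
  have hnsN : ∀ k, Nf k ≤ ns k := by
    intro k
    cases k with
    | zero => exact le_rfl
    | succ k => exact le_max_left _ _
  set S : ℕ → Set Ω := fun k => {ω | (2⁻¹ : ℝ) ^ k ≤ |gm (ns k) ω - gm (ns (k + 1)) ω|}
    with hS
  have hSP : ∀ k, P (S k) ≤ (2⁻¹ : ENNReal) ^ k := fun k =>
    hNf k (ns k) (ns (k + 1)) (hnsN k) (le_trans (hnsN k) (hns_succ k).le)
  have hsum : (∑' k, P (S k)) ≠ ⊤ := by
    apply ne_top_of_le_ne_top _ (ENNReal.tsum_le_tsum hSP)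
    rw [ENNReal.tsum_geometric, ENNReal.one_sub_inv_two, inv_inv]
    exact ENNReal.ofNat_ne_top
  have hBC := MeasureTheory.ae_eventually_notMem hsum
  set G : Ω → ℝ := fun ω =>
    if hc : ∃ L, Tendsto (fun k => gm (ns k) ω) atTop (nhds L) then hc.choose else 0
    with hG
  have hGt : ∀ᵐ ω ∂P, Tendsto (fun k => gm (ns k) ω) atTop (nhds (G ω)) := by
    filter_upwards [hBC] with ω hω
    have hc : ∃ L, Tendsto (fun k => gm (ns k) ω) atTop (nhds L) := by
      apply tendsto_of_geometric_dist
      filter_upwards [hω] with k hk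
      exact not_le.1 hk
    have hGω : G ω = hc.choose := by rw [hG]; simp only []; rw [dif_pos hc]
    rw [hGω]
    exact hc.choose_spec
  have hGm : AEMeasurable G P :=
    aemeasurable_of_tendsto_metrizable_ae atTop (fun k => (hgmm (ns k)).aemeasurable) hGt
  refine ⟨fun k => g (ns k), G, fun k => hgK (ns k),
    fun k => myCombo_mono h hns_mono.le_apply (hgC (ns k)), hGm, ?_⟩
  have hall := MeasureTheory.ae_all_iff.2 (fun k => hgmeq (ns k))
  filter_upwards [hGt, hall] with ω h1 h2
  exact h1.congr (fun k => (h2 k).symm)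

end Aux4
/-- if `1 ∈ C` and `cs_1(C)` is bounded, then the solid hull `S` of
`cs_1(C)` belongs to `CS_1(C)` and `1` is maximal in `S`. -/
theorem solidHull_mem_CSclass_and_one_maximal
    (P : Measure Ω) [IsProbabilityMeasure P]
    (C : Set (Ω → ℝ)) (hC : C ⊆ L0plus P) (hconv : Convex ℝ C)
    (h1 : (fun _ => (1 : ℝ)) ∈ C)
    (hb : BoundedInProb P (csSet P C (fun _ => (1 : ℝ)))) :
    SolidHull P (csSet P C (fun _ => (1 : ℝ))) ∈ CSclass P C (fun _ => (1 : ℝ)) ∧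
    ∀ f ∈ SolidHull P (csSet P C (fun _ => (1 : ℝ))),
      (fun _ => (1 : ℝ)) ≤ᵐ[P] f → f =ᵐ[P] (fun _ => (1 : ℝ)) := by
  obtain ⟨hcs0, hcsC, hcsconv, hcsclosed, hcs3⟩ :=
    csSet_mem_CSclass P C hC (fun _ => (1 : ℝ))
  set cs := csSet P C (fun _ => (1 : ℝ)) with hcsdef
  constructor
  · refine ⟨fun f hf => hf.1, ?_, ?_, ?_, ?_⟩
    · -- C ⊆ S
      intro f hf
      exact ⟨hC hf, f, hcsC hf, Filter.EventuallyLE.refl _ _⟩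
    · -- convex
      intro x hx y hy a b ha hb' hab
      obtain ⟨hxL, hx', hx'cs, hxle⟩ := hx
      obtain ⟨hyL, hy', hy'cs, hyle⟩ := hy
      refine ⟨(L0plus_mem_CSclass P C hC (fun _ => (1:ℝ))).2.2.1 hxL hyL ha hb' hab,
        a • hx' + b • hy', hcsconv hx'cs hy'cs ha hb' hab, ?_⟩
      filter_upwards [hxle, hyle] with ω h1' h2'
      simp only [Pi.add_apply, Pi.smul_apply, smul_eq_mul]
      exact add_le_add (mul_le_mul_of_nonneg_left h1' ha) (mul_le_mul_of_nonneg_left h2' hb')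
    · -- closed in probability
      intro f g hf hg ht
      obtain ⟨ns, hns_mono, hae⟩ := ht.exists_seq_tendsto_ae
      choose hd hdcs hdle using fun n => (hf n).2
      obtain ⟨c, G, hcK, hcC, hGm, hGt⟩ :=
        myKomlos P cs hcs0 hcsconv hb (fun i => hd (ns i)) (fun i => hdcs (ns i))
      have hGcs : G ∈ cs := by
        apply hcsclosed c G hcK hGm
        exact tendstoInMeasure_of_tendsto_ae
          (fun k => ((hcs0 (hcK k)).1).aestronglyMeasurable) hGt
      choose N w hw0 hwlt hwN hws hceq using hcC
      have hφle : ∀ k, ∀ᵐ ω ∂P,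
          (∑ j ∈ Finset.range (N k), w k j * f (ns j) ω) ≤ c k ω := by
        intro k
        have hall := MeasureTheory.ae_all_iff.2 (fun j : ℕ => hdle (ns j))
        filter_upwards [hall] with ω hω
        rw [hceq k]
        exact Finset.sum_le_sum fun j _ => mul_le_mul_of_nonneg_left (hω j) (hw0 k j)
      have h1' : ∀ᵐ ω ∂P, Tendsto
          (fun k => ∑ j ∈ Finset.range (N k), w k j * f (ns j) ω) atTop (nhds (g ω)) := by
        filter_upwards [hae] with ω hω
        exact combo_tendsto hω N w hw0 hwlt hws
      have hgle : g ≤ᵐ[P] G := by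
        have hall := MeasureTheory.ae_all_iff.2 hφle
        filter_upwards [h1', hGt, hall] with ω hω1 hω2 hω3
        exact le_of_tendsto_of_tendsto' hω1 hω2 fun k => hω3 k
      have hgL : g ∈ L0plus P := by
        refine ⟨hg, ?_⟩
        have hall := MeasureTheory.ae_all_iff.2 (fun i : ℕ => (hf (ns i)).1.2)
        filter_upwards [hae, hall] with ω hω1 hω2
        exact le_of_tendsto_of_tendsto' tendsto_const_nhds hω1 fun i => hω2 i
      exact ⟨hgL, G, hGcs, hgle⟩
    · -- CS3
      intro f hf δ hδ hmem
      obtain ⟨hfL, hfd, hfdcs, hfle⟩ := hf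
      have hle' : ∀ᵐ ω ∂P,
          (1 + δ) * f ω - δ * 1 ≤ (1 + δ) * hfd ω - δ * 1 := by
        filter_upwards [hfle] with ω hω
        have := mul_le_mul_of_nonneg_left hω (by linarith : (0:ℝ) ≤ 1 + δ)
        linarith
      have hL' : (fun ω => (1 + δ) * hfd ω - δ * ((fun _ => (1:ℝ)) ω)) ∈ L0plus P := by
        constructor
        · exact ((hcs0 hfdcs).1.const_mul _).sub aemeasurable_const
        · filter_upwards [hmem.2, hle'] with ω hω1 hω2
          have hω1' : 0 ≤ (1 + δ) * f ω - δ * 1 := hω1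
          show 0 ≤ (1 + δ) * hfd ω - δ * 1
          linarith
      have hin := hcs3 hfd hfdcs δ hδ hL'
      refine ⟨hmem, _, hin, ?_⟩
      filter_upwards [hle'] with ω hω
      exact hω
  · -- maximality of 1
    intro f hf h1f
    obtain ⟨hfL, hh, hhcs, hfle⟩ := hf
    have h1h : (fun _ => (1:ℝ)) ≤ᵐ[P] hh := h1f.trans hfle
    have hhle : ∀ᵐ ω ∂P, hh ω ≤ 1 := by
      by_contra hcon
      have hpos : P {ω | 1 < hh ω} ≠ 0 := by
        intro h0
        apply hcon
        rw [ae_iff]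
        rw [show {ω | ¬ hh ω ≤ 1} = {ω | 1 < hh ω} by ext ω; simp [not_le]]
        exact h0
      have hU : {ω | 1 < hh ω} ⊆ ⋃ k : ℕ, {ω | 1 + 1 / ((k:ℝ) + 1) < hh ω} := by
        intro ω hω
        have hω' : (1:ℝ) < hh ω := hω
        obtain ⟨k, hk⟩ := exists_nat_one_div_lt (sub_pos.2 hω')
        exact Set.mem_iUnion.2 ⟨k, by simp only [Set.mem_setOf_eq]; linarith⟩
      have hex : ∃ k : ℕ, P {ω | 1 + 1 / ((k:ℝ) + 1) < hh ω} ≠ 0 := by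
        by_contra hall
        push_neg at hall
        apply hpos
        refine le_antisymm ?_ zero_le
        calc P {ω | 1 < hh ω} ≤ P (⋃ k : ℕ, {ω | 1 + 1 / ((k:ℝ) + 1) < hh ω}) :=
              measure_mono hU
          _ ≤ ∑' k : ℕ, P {ω | 1 + 1 / ((k:ℝ) + 1) < hh ω} := measure_iUnion_le _
          _ = 0 := by simp only [hall, tsum_zero]
      obtain ⟨k, hk⟩ := hex
      have hε₀pos : 0 < 1 / ((k:ℝ) + 1) := by positivity
      set ε₀ : ℝ := 1 / ((k:ℝ) + 1) with hε₀
      have claim : ∀ ℓ : ℝ, 0 ≤ ℓ →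
          P {ω | 1 + ε₀ < hh ω} ≤ ⨆ f ∈ cs, P {ω | ℓ < f ω} := by
        intro ℓ hℓ
        have hδ0 : 0 ≤ ℓ / ε₀ := div_nonneg hℓ hε₀pos.le
        set δ := ℓ / ε₀ with hδdef
        have hmemL : (fun ω => (1 + δ) * hh ω - δ * ((fun _ => (1:ℝ)) ω)) ∈ L0plus P := by
          constructor
          · exact ((hcs0 hhcs).1.const_mul _).sub aemeasurable_const
          · filter_upwards [h1h] with ω hω
            have hω' : (1:ℝ) ≤ hh ω := hω
            show 0 ≤ (1 + δ) * hh ω - δ * 1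
            nlinarith
        have hin := hcs3 hh hhcs δ hδ0 hmemL
        refine le_trans (measure_mono ?_) (le_biSup (fun f => P {ω | ℓ < f ω}) hin)
        intro ω hω
        have hω' : 1 + ε₀ < hh ω := hω
        have hℓε : δ * ε₀ = ℓ := div_mul_cancel₀ ℓ hε₀pos.ne'
        show ℓ < (1 + δ) * hh ω - δ * 1
        nlinarith
      have hfin : P {ω | 1 + ε₀ < hh ω} ≤ 0 :=
        ge_of_tendsto hb (eventually_atTop.2 ⟨0, fun ℓ hℓ => claim ℓ hℓ⟩)
      exact hk (le_antisymm hfin zero_le)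
    filter_upwards [h1f, hfle, hhle] with ω hω1 hω2 hω3
    exact le_antisymm (hω2.trans hω3) hω1

end
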